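/- Let Q(ℓ,w), 0 ≤ w ≤ ℓ, be a family of row-stochastic real 𝒥×𝒥 matrices with nonnegative entries and Π the matrices produced by the recursion from Q. Then for every γ > 0, every s > 0 and every i ∈ 𝒥, the approximate transition probabilities have total mass one: Σ_{j∈𝒥} p^a_{ij}(s) + ∫_0^s Σ_{j∈𝒥} p^c_{ij}(s,v) dv = 1. -/

import Mathlib

open scoped BigOperators

noncomputable section

/-- The diagonal part of a matrix. -/
def diagPart {J : Type*} [DecidableEq J] (M : Matrix J J ℝ) : Matrix J J ℝ :=
  Matrix.of fun i j => if i = j then M i j else 0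

/-- The off-diagonal part of a matrix. -/
def offdiagPart {J : Type*} [DecidableEq J] (M : Matrix J J ℝ) : Matrix J J ℝ :=
  M - diagPart M

/-- A matrix is row-substochastic if its entries are nonnegative and every row sum is ≤ 1. -/
def RowSubstochastic {J : Type*} [Fintype J] (M : Matrix J J ℝ) : Prop :=
  (∀ i j, 0 ≤ M i j) ∧ ∀ i, ∑ j, M i j ≤ 1

/-- A matrix is row-stochastic if its entries are nonnegative and every row sum equals 1. -/
def RowStochastic {J : Type*} [Fintype J] (M : Matrix J J ℝ) : Prop :=
  (∀ i j, 0 ≤ M i j) ∧ ∀ i, ∑ j, M i j = 1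

/-- The matrices `Π(k,v)` produced by the recursion from the family `Q(ℓ,w)`:
`Π(0,0) = I`, `Π(k,v) = 0` for `v > k`,
`Π(k,0) = ∑_{k'=0}^{k-1} Π(k-1,k') Qⁿ(k-1,k')` for `k ≥ 1`, and
`Π(k,v) = Π(k-1,v-1) Q^d(k-1,v-1)` for `k ≥ v ≥ 1`. -/
def PiRec {J : Type*} [Fintype J] [DecidableEq J]
    (Q : ℕ → ℕ → Matrix J J ℝ) : ℕ → ℕ → Matrix J J ℝ
  | 0, v => if v = 0 then 1 else 0
  | (k+1), v =>
      if v = 0 then ∑ k' ∈ Finset.range (k+1), PiRec Q k k' * offdiagPart (Q k k')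
      else if v ≤ k + 1 then PiRec Q k (v-1) * diagPart (Q k (v-1)) else 0

/-- `C_k`: `C_0 = 0` and, for `k ≥ 1`,
`C_k = sup { ∑_j |Q_{ij}(ℓ,w) − Q̃_{ij}(ℓ,w)| : 0 ≤ w ≤ ℓ ≤ k−1, i ∈ 𝒥 }`. -/
def Cconst {J : Type*} [Fintype J] (Q Q' : ℕ → ℕ → Matrix J J ℝ) (k : ℕ) : ℝ :=
  sSup {x : ℝ | ∃ ℓ w, ∃ i : J, w ≤ ℓ ∧ ℓ < k ∧ x = ∑ j, |Q ℓ w i j - Q' ℓ w i j|}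

/-- `Poi_λ(k) = e^{−λ} λ^k / k!`. -/
def Poi (lam : ℝ) (k : ℕ) : ℝ := Real.exp (-lam) * lam ^ k / (Nat.factorial k)

/-- `Erl_{k,γ}(x) = γ (γx)^{k−1} e^{−γx} / (k−1)!` (intended for `k ≥ 1`). -/
def Erl (k : ℕ) (γ x : ℝ) : ℝ :=
  γ * (γ * x) ^ (k - 1) * Real.exp (-(γ * x)) / (Nat.factorial (k - 1))

/-- Atomic part of the approximate transition probabilities:
`p^a_{ij}(s) = 1_{i=j} ∑_{ℓ≥0} Poi_{γs}(ℓ) Π_{ii}(ℓ,ℓ)`. -/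
def pAtom {J : Type*} [Fintype J] [DecidableEq J] (γ : ℝ)
    (Pi : ℕ → ℕ → Matrix J J ℝ) (s : ℝ) (i j : J) : ℝ :=
  (if i = j then 1 else 0) * ∑' ℓ : ℕ, Poi (γ * s) ℓ * Pi ℓ ℓ i i

/-- Absolutely continuous part of the approximate transition probabilities:
`p^c_{ij}(s,v) = ∑_{ℓ≥1} ∑_{w=0}^{ℓ−1} Erl_{ℓ−w,γ}(s−v) Poi_{γv}(w) Π_{ij}(ℓ,w)`. -/
def pCont {J : Type*} [Fintype J] (γ : ℝ)
    (Pi : ℕ → ℕ → Matrix J J ℝ) (s v : ℝ) (i j : J) : ℝ :=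
  ∑' ℓ : ℕ, ∑ w ∈ Finset.range ℓ, Erl (ℓ - w) γ (s - v) * Poi (γ * v) w * Pi ℓ w i j



section AuxMatrix


variable {J : Type*} [Fintype J] [DecidableEq J]

lemma diagPart_apply (M : Matrix J J ℝ) (i j : J) :
    diagPart M i j = if i = j then M i j else 0 := rfl

lemma offdiagPart_apply (M : Matrix J J ℝ) (i j : J) :
    offdiagPart M i j = if i = j then 0 else M i j := by
  simp only [offdiagPart, Matrix.sub_apply, diagPart_apply]
  split <;> simp

lemma sum_diagPart (M : Matrix J J ℝ) (m : J) : ∑ j, diagPart M m j = M m m := by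
  simp [diagPart_apply, Finset.sum_ite_eq' Finset.univ m (fun j => M m j)]

lemma sum_offdiagPart (M : Matrix J J ℝ) (m : J) :
    ∑ j, offdiagPart M m j = (∑ j, M m j) - M m m := by
  simp only [offdiagPart, Matrix.sub_apply, Finset.sum_sub_distrib, sum_diagPart]

variable (Q : ℕ → ℕ → Matrix J J ℝ)

lemma PiRec_succ_zero (k : ℕ) :
    PiRec Q (k+1) 0 = ∑ k' ∈ Finset.range (k+1), PiRec Q k k' * offdiagPart (Q k k') := by
  rw [PiRec, if_pos rfl]

lemma PiRec_succ_succ (k v : ℕ) (hv : v ≤ k) :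
    PiRec Q (k+1) (v+1) = PiRec Q k v * diagPart (Q k v) := by
  rw [PiRec]; simp [Nat.succ_le_succ hv]

lemma PiRec_of_gt : ∀ k v, k < v → PiRec Q k v = 0 := by
  intro k v h
  cases k with
  | zero => rw [PiRec, if_neg (by omega)]
  | succ k => rw [PiRec]; rw [if_neg (by omega), if_neg (by omega)]

variable (hQ : ∀ ℓ w, w ≤ ℓ → RowStochastic (Q ℓ w))
include hQ

lemma PiRec_nonneg : ∀ k v (i j : J), 0 ≤ PiRec Q k v i j := by
  intro k
  induction k with
  | zero =>
    intro v i j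
    by_cases hv : v = 0 <;> simp [PiRec, hv, Matrix.one_apply]
    positivity
  | succ k ih =>
    intro v i j
    match v with
    | 0 =>
      rw [PiRec_succ_zero]
      simp only [Finset.sum_apply, Matrix.sum_apply, Matrix.mul_apply]
      apply Finset.sum_nonneg; intro k' hk'
      apply Finset.sum_nonneg; intro m _
      apply mul_nonneg (ih k' i m)
      rw [offdiagPart_apply]
      split
      · exact le_refl 0
      · exact (hQ k k' (Finset.mem_range_succ_iff.mp hk')).1 m j
    | v+1 =>
      by_cases hv2 : v ≤ k
      · rw [PiRec_succ_succ Q k v hv2, Matrix.mul_apply]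
        apply Finset.sum_nonneg; intro m _
        apply mul_nonneg (ih v i m)
        rw [diagPart_apply]
        split
        · exact (hQ k v hv2).1 m j
        · exact le_refl 0
      · rw [PiRec_of_gt Q (k+1) (v+1) (by omega)]; simp

lemma PiRec_rowsum : ∀ k (i : J), ∑ v ∈ Finset.range (k+1), ∑ j, PiRec Q k v i j = 1 := by
  intro k
  induction k with
  | zero => intro i; simp [PiRec, Matrix.one_apply]
  | succ k ih =>
    intro i
    rw [Finset.sum_range_succ']
    have h0 : ∑ j, PiRec Q (k+1) 0 i j
        = ∑ k' ∈ Finset.range (k+1), ∑ m, PiRec Q k k' i m * (1 - Q k k' m m) := by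
      rw [PiRec_succ_zero]
      simp only [Finset.sum_apply, Matrix.sum_apply, Matrix.mul_apply]
      rw [Finset.sum_comm]
      refine Finset.sum_congr rfl (fun k' hk' => ?_)
      rw [Finset.sum_comm]
      refine Finset.sum_congr rfl (fun m _ => ?_)
      rw [← Finset.mul_sum, sum_offdiagPart, (hQ k k' (Finset.mem_range_succ_iff.mp hk')).2 m]
    have h1 : ∀ v ∈ Finset.range (k+1), ∑ j, PiRec Q (k+1) (v+1) i j
        = ∑ m, PiRec Q k v i m * Q k v m m := by
      intro v hv
      rw [PiRec_succ_succ Q k v (Finset.mem_range_succ_iff.mp hv)]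
      simp only [Matrix.mul_apply]
      rw [Finset.sum_comm]
      exact Finset.sum_congr rfl (fun m _ => by rw [← Finset.mul_sum, sum_diagPart])
    rw [h0, Finset.sum_congr rfl h1, ← Finset.sum_add_distrib]
    have : ∀ v ∈ Finset.range (k+1),
        (∑ m, PiRec Q k v i m * Q k v m m) + ∑ m, PiRec Q k v i m * (1 - Q k v m m)
        = ∑ j, PiRec Q k v i j := by
      intro v hv
      rw [← Finset.sum_add_distrib]
      exact Finset.sum_congr rfl (fun m _ => by ring)
    rw [Finset.sum_congr rfl this]
    exact ih i

lemma PiRec_rowsum_le (k v : ℕ) (i : J) : ∑ j, PiRec Q k v i j ≤ 1 := by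
  by_cases hv : v ≤ k
  · calc ∑ j, PiRec Q k v i j
        ≤ ∑ v' ∈ Finset.range (k+1), ∑ j, PiRec Q k v' i j := by
          refine Finset.single_le_sum (f := fun v' => ∑ j, PiRec Q k v' i j)
            (fun v' _ => Finset.sum_nonneg fun j _ => PiRec_nonneg Q hQ k v' i j)
            (Finset.mem_range_succ_iff.mpr hv)
      _ = 1 := PiRec_rowsum Q hQ k i
  · rw [PiRec_of_gt Q k v (by omega)]; simp

lemma PiRec_le_one (k v : ℕ) (i j : J) : PiRec Q k v i j ≤ 1 := by
  calc PiRec Q k v i j ≤ ∑ j', PiRec Q k v i j' :=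
        Finset.single_le_sum (fun j' _ => PiRec_nonneg Q hQ k v i j') (Finset.mem_univ j)
    _ ≤ 1 := PiRec_rowsum_le Q hQ k v i

omit hQ in
lemma PiRec_diag : ∀ ℓ (i j : J), i ≠ j → PiRec Q ℓ ℓ i j = 0 := by
  intro ℓ
  induction ℓ with
  | zero => intro i j hij; simp [PiRec, Matrix.one_apply, hij]
  | succ ℓ ih =>
    intro i j hij
    rw [PiRec_succ_succ Q ℓ ℓ le_rfl, Matrix.mul_apply]
    refine Finset.sum_eq_zero (fun m _ => ?_)
    rw [diagPart_apply]
    by_cases hmj : m = j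
    · subst hmj; rw [ih i m hij]; ring
    · simp [hmj]

end AuxMatrix
lemma poi_nonneg {lam : ℝ} (h : 0 ≤ lam) (k : ℕ) : 0 ≤ Poi lam k := by
  unfold Poi; positivity

lemma poi_hasSum (lam : ℝ) : HasSum (Poi lam) 1 := by
  have h := NormedSpace.expSeries_div_hasSum_exp lam
  have h2 := h.mul_left (Real.exp (-lam))
  have : Real.exp (-lam) * NormedSpace.exp lam = 1 := by
    rw [← Real.exp_eq_exp_ℝ, ← Real.exp_add]; simp
  rw [this] at h2
  have e : Poi lam = fun k => Real.exp (-lam) * (lam ^ k / (Nat.factorial k)) := by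
    funext k
    unfold Poi
    rw [mul_div_assoc]
  rw [e]; exact h2

lemma poi_summable (lam : ℝ) : Summable (Poi lam) := (poi_hasSum lam).summable

lemma poi_tsum (lam : ℝ) : ∑' k, Poi lam k = 1 := (poi_hasSum lam).tsum_eq

lemma poi_succ_mul (lam : ℝ) (k : ℕ) : Poi lam (k+1) * (k+1 : ℝ) = lam * Poi lam k := by
  unfold Poi
  rw [Nat.factorial_succ]
  push_cast
  have hk : ((k:ℝ)+1) ≠ 0 := by positivity
  have hf : (Nat.factorial k : ℝ) ≠ 0 := Nat.cast_ne_zero.mpr (Nat.factorial_ne_zero k)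
  field_simp
  ring

lemma binom_fact (n : ℕ) (x y : ℝ) :
    ∑ w ∈ Finset.range (n+1), x^(n-w) * y^w / ((Nat.factorial (n-w)) * (Nat.factorial w))
      = (x+y)^n / Nat.factorial n := by
  rw [show x + y = y + x by ring, add_pow, Finset.sum_div]
  refine Finset.sum_congr rfl (fun w hw => ?_)
  have hw' : w ≤ n := Finset.mem_range_succ_iff.mp hw
  have hc : (Nat.choose n w : ℝ) * (Nat.factorial w * Nat.factorial (n-w)) = Nat.factorial n := by
    norm_cast
    rw [← mul_assoc]
    exact Nat.choose_mul_factorial_mul_factorial hw'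
  have h1 : (Nat.factorial (n-w) : ℝ) ≠ 0 := Nat.cast_ne_zero.mpr (Nat.factorial_ne_zero _)
  have h2 : (Nat.factorial w : ℝ) ≠ 0 := Nat.cast_ne_zero.mpr (Nat.factorial_ne_zero _)
  have h3 : (Nat.factorial n : ℝ) ≠ 0 := Nat.cast_ne_zero.mpr (Nat.factorial_ne_zero _)
  field_simp
  rw [← hc]
  ring

lemma erl_poi_conv (γ u v : ℝ) (ℓ : ℕ) (hℓ : 1 ≤ ℓ) :
    ∑ w ∈ Finset.range ℓ, Erl (ℓ - w) γ u * Poi (γ * v) w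
      = γ * Poi (γ * u + γ * v) (ℓ - 1) := by
  obtain ⟨n, rfl⟩ : ∃ n, ℓ = n + 1 := ⟨ℓ - 1, by omega⟩
  have key : ∀ w ∈ Finset.range (n+1), Erl (n + 1 - w) γ u * Poi (γ * v) w
      = (γ * Real.exp (-(γ*u) + -(γ*v))) *
        ((γ*u)^(n-w) * (γ*v)^w / ((Nat.factorial (n-w)) * (Nat.factorial w))) := by
    intro w hw
    have hw' : w ≤ n := Finset.mem_range_succ_iff.mp hw
    have h1 : n + 1 - w - 1 = n - w := by omega
    unfold Erl Poi
    rw [h1, Real.exp_add]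
    field_simp
  rw [Finset.sum_congr rfl key, ← Finset.mul_sum, binom_fact]
  unfold Poi
  have : n + 1 - 1 = n := rfl
  rw [this, show -(γ*u) + -(γ*v) = -(γ*u + γ*v) by ring]
  ring

lemma beta_nat (a : ℕ) : ∀ (b : ℕ) (s : ℝ),
    ∫ v in (0:ℝ)..s, (s - v)^a * v^b
      = (Nat.factorial a) * (Nat.factorial b) / (Nat.factorial (a+b+1)) * s^(a+b+1) := by
  induction a with
  | zero =>
    intro b s
    simp only [pow_zero, one_mul, integral_pow, Nat.factorial_zero,
      Nat.zero_add, Nat.cast_one]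
    rw [Nat.factorial_succ]
    push_cast
    have h2 : (Nat.factorial b : ℝ) ≠ 0 := Nat.cast_ne_zero.mpr (Nat.factorial_ne_zero _)
    have : ((b:ℝ)+1) ≠ 0 := by positivity
    field_simp
    ring
  | succ a ih =>
    intro b s
    have hu : ∀ x ∈ Set.uIcc (0:ℝ) s, HasDerivAt (fun v => (s - v)^(a+1))
        (-((a+1:ℝ) * (s - x)^a)) x := by
      intro x _
      have h1 : HasDerivAt (fun v : ℝ => s - v) (-1) x := by
        simpa using (hasDerivAt_id x).const_sub s
      have h2 := (hasDerivAt_pow (a+1) (s - x)).comp x h1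
      refine h2.congr_deriv ?_
      push_cast
      ring
    have hv : ∀ x ∈ Set.uIcc (0:ℝ) s, HasDerivAt (fun v : ℝ => v^(b+1) / (b+1 : ℝ))
        (x^b) x := by
      intro x _
      have h2 := (hasDerivAt_pow (b+1) x).div_const (b+1 : ℝ)
      refine h2.congr_deriv ?_
      have : ((b:ℝ)+1) ≠ 0 := by positivity
      field_simp
      push_cast
      simp
    have hint1 : IntervalIntegrable (fun x : ℝ => -((a+1:ℝ) * (s - x)^a)) MeasureTheory.volume 0 s :=
      (Continuous.intervalIntegrable (by continuity) 0 s)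
    have hint2 : IntervalIntegrable (fun x : ℝ => x^b) MeasureTheory.volume 0 s :=
      (Continuous.intervalIntegrable (by continuity) 0 s)
    have parts := intervalIntegral.integral_mul_deriv_eq_deriv_mul hu hv hint1 hint2
    have hrw : (fun x : ℝ => -((a+1:ℝ) * (s - x)^a) * (x^(b+1) / (b+1:ℝ)))
        = fun x => (-((a+1:ℝ)/((b:ℝ)+1))) * ((s - x)^a * x^(b+1)) := by
      funext x
      have : ((b:ℝ)+1) ≠ 0 := by positivity
      field_simp
    rw [hrw, intervalIntegral.integral_const_mul, ih (b+1) s] at parts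
    simp only [sub_self, sub_zero, zero_pow (by omega : a+1 ≠ 0),
      zero_pow (by omega : b+1 ≠ 0)] at parts
    rw [parts]
    have hidx : a + (b+1) + 1 = a + 1 + b + 1 := by omega
    rw [hidx, show a+1+b+1 = (a+b+1)+1 by omega, Nat.factorial_succ (a+b+1),
      Nat.factorial_succ a, Nat.factorial_succ b]
    have h1 : ((a:ℝ)+b+1+1) ≠ 0 := by positivity
    have h2 : (Nat.factorial (a+b+1) : ℝ) ≠ 0 := Nat.cast_ne_zero.mpr (Nat.factorial_ne_zero _)
    have h3 : ((b:ℝ)+1) ≠ 0 := by positivity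
    push_cast
    field_simp
    ring

lemma erl_poi_integral (γ s : ℝ) (k w : ℕ) (hk : 1 ≤ k) :
    ∫ v in (0:ℝ)..s, Erl k γ (s - v) * Poi (γ * v) w = Poi (γ * s) (k + w) := by
  obtain ⟨m, rfl⟩ : ∃ m, k = m + 1 := ⟨k - 1, by omega⟩
  have hfw : (Nat.factorial w : ℝ) ≠ 0 := Nat.cast_ne_zero.mpr (Nat.factorial_ne_zero _)
  have hfk : (Nat.factorial m : ℝ) ≠ 0 := Nat.cast_ne_zero.mpr (Nat.factorial_ne_zero _)
  have key : ∀ v : ℝ, Erl (m+1) γ (s - v) * Poi (γ * v) w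
      = (γ^(m+1+w) * Real.exp (-(γ*s)) / ((Nat.factorial m) * (Nat.factorial w)))
        * ((s - v)^m * v^w) := by
    intro v
    have he : Real.exp (-(γ*(s-v))) * Real.exp (-(γ*v)) = Real.exp (-(γ*s)) := by
      rw [← Real.exp_add]; congr 1; ring
    unfold Erl Poi
    simp only [Nat.add_sub_cancel]
    rw [← he, mul_pow, mul_pow, show m+1+w = m + (w+1) by omega, pow_add, pow_succ]
    field_simp
  rw [intervalIntegral.integral_congr (fun v _ => key v), intervalIntegral.integral_const_mul,
    beta_nat m w s, show m + w + 1 = m + 1 + w by omega]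
  unfold Poi
  rw [mul_pow]
  have hfkw : (Nat.factorial (m+1+w) : ℝ) ≠ 0 := Nat.cast_ne_zero.mpr (Nat.factorial_ne_zero _)
  field_simp

lemma erl_nonneg {γ x : ℝ} (hγ : 0 ≤ γ) (hx : 0 ≤ x) (k : ℕ) : 0 ≤ Erl k γ x := by
  unfold Erl; positivity

lemma summable_shift (f : ℕ → ℝ) (hf : Summable fun n => f (n+1)) : Summable f :=
  (summable_nat_add_iff 1).mp hf

theorem approximate_transition_probabilities_total_mass_one
    {J : Type*} [Fintype J] [DecidableEq J] [Nonempty J]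
    (Q : ℕ → ℕ → Matrix J J ℝ)
    (hQ : ∀ ℓ w, w ≤ ℓ → RowStochastic (Q ℓ w))
    (γ : ℝ) (hγ : 0 < γ) (s : ℝ) (hs : 0 < s) (i : J) :
    (∑ j, pAtom γ (PiRec Q) s i j) +
      (∫ v in (0:ℝ)..s, ∑ j, pCont γ (PiRec Q) s v i j) = 1 := by
  classical
  have hlam0 : 0 ≤ γ * s := by positivity
  have hP0 := PiRec_nonneg Q hQ
  have hP1 := PiRec_le_one Q hQ
  -- atomic part
  have hA : ∑ j, pAtom γ (PiRec Q) s i j = ∑' ℓ, Poi (γ*s) ℓ * PiRec Q ℓ ℓ i i := by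
    unfold pAtom
    rw [← Finset.sum_mul]
    simp
  -- continuous part
  set g : ℕ → ℝ → ℝ := fun ℓ v => ∑ j, ∑ w ∈ Finset.range ℓ,
      Erl (ℓ - w) γ (s - v) * Poi (γ * v) w * PiRec Q ℓ w i j with hgdef
  have hgcont : ∀ ℓ, Continuous (g ℓ) := by
    intro ℓ
    apply continuous_finset_sum; intro j _
    apply continuous_finset_sum; intro w _
    apply Continuous.mul
    apply Continuous.mul
    · unfold Erl; fun_prop
    · unfold Poi; fun_prop
    · exact continuous_const
  set mfun : ℕ → ℝ := fun ℓ => if ℓ = 0 then 0 else γ * Poi (γ*s) (ℓ-1) with hmdef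
  have hmfun_nonneg : ∀ ℓ, 0 ≤ mfun ℓ := by
    intro ℓ
    simp only [hmdef]
    split
    · exact le_refl 0
    · exact mul_nonneg hγ.le (poi_nonneg hlam0 _)
  have hmsummable : Summable mfun := by
    apply summable_shift
    have : (fun n => mfun (n+1)) = fun n => γ * Poi (γ*s) n := by
      funext n; simp [hmdef]
    rw [this]
    exact (poi_summable (γ*s)).mul_left γ
  -- pointwise bound on the inner sums, valid for v ∈ Ioc 0 s
  have hconv : ∀ v ∈ Set.Ioc (0:ℝ) s, ∀ ℓ,
      ∑ w ∈ Finset.range ℓ, Erl (ℓ - w) γ (s - v) * Poi (γ * v) w = mfun ℓ := by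
    intro v _ ℓ
    match ℓ with
    | 0 => simp [hmdef]
    | ℓ+1 =>
      rw [erl_poi_conv γ (s-v) v (ℓ+1) (by omega),
        show γ * (s - v) + γ * v = γ * s by ring]
      simp [hmdef]
  have hbound : ∀ v ∈ Set.Ioc (0:ℝ) s, ∀ ℓ (j : J),
      (0 ≤ ∑ w ∈ Finset.range ℓ, Erl (ℓ - w) γ (s - v) * Poi (γ * v) w * PiRec Q ℓ w i j) ∧
      (∑ w ∈ Finset.range ℓ, Erl (ℓ - w) γ (s - v) * Poi (γ * v) w * PiRec Q ℓ w i j ≤ mfun ℓ) := by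
    intro v hv ℓ j
    have hEP : ∀ w : ℕ, 0 ≤ Erl (ℓ - w) γ (s - v) * Poi (γ * v) w :=
      fun w => mul_nonneg (erl_nonneg hγ.le (by linarith [hv.2]) _)
        (poi_nonneg (by nlinarith [hv.1]) w)
    constructor
    · exact Finset.sum_nonneg fun w _ =>
        mul_nonneg (hEP w) (hP0 ℓ w i j)
    · rw [← hconv v hv ℓ]
      exact Finset.sum_le_sum fun w _ =>
        mul_le_of_le_one_right (hEP w) (hP1 ℓ w i j)
  have hjsummand : ∀ v ∈ Set.Ioc (0:ℝ) s, ∀ j : J, Summable (fun ℓ =>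
      ∑ w ∈ Finset.range ℓ, Erl (ℓ - w) γ (s - v) * Poi (γ * v) w * PiRec Q ℓ w i j) := by
    intro v hv j
    exact Summable.of_nonneg_of_le (fun ℓ => (hbound v hv ℓ j).1)
      (fun ℓ => (hbound v hv ℓ j).2) hmsummable
  have hFeq : ∀ v ∈ Set.Ioc (0:ℝ) s,
      (∑ j, pCont γ (PiRec Q) s v i j) = ∑' ℓ, g ℓ v := by
    intro v hv
    unfold pCont
    rw [← Summable.tsum_finsetSum (fun j _ => hjsummand v hv j)]
  have hInt : ∀ ℓ, MeasureTheory.IntegrableOn (g ℓ) (Set.Ioc (0:ℝ) s) :=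
    fun ℓ => (hgcont ℓ).integrableOn_Ioc
  have hIocvol : (MeasureTheory.volume (Set.Ioc (0:ℝ) s)).toReal = s := by
    rw [Real.volume_Ioc, sub_zero, ENNReal.toReal_ofReal hs.le]
  have hnormbound : ∀ ℓ, ∫ v in Set.Ioc (0:ℝ) s, ‖g ℓ v‖ ≤ s * ((Fintype.card J : ℝ) * mfun ℓ) := by
    intro ℓ
    have hgb : ∀ v ∈ Set.Ioc (0:ℝ) s, ‖g ℓ v‖ ≤ (Fintype.card J : ℝ) * mfun ℓ := by
      intro v hv
      rw [Real.norm_of_nonneg (Finset.sum_nonneg fun j _ => (hbound v hv ℓ j).1)]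
      calc ∑ j, ∑ w ∈ Finset.range ℓ, Erl (ℓ - w) γ (s - v) * Poi (γ * v) w * PiRec Q ℓ w i j
          ≤ ∑ _j : J, mfun ℓ := Finset.sum_le_sum fun j _ => (hbound v hv ℓ j).2
        _ = (Fintype.card J : ℝ) * mfun ℓ := by
            rw [Finset.sum_const, Finset.card_univ, nsmul_eq_mul]
    calc ∫ v in Set.Ioc (0:ℝ) s, ‖g ℓ v‖
        ≤ ∫ _v in Set.Ioc (0:ℝ) s, ((Fintype.card J : ℝ) * mfun ℓ) := by
          refine MeasureTheory.setIntegral_mono_on (hInt ℓ).norm ?_ measurableSet_Ioc hgb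
          exact MeasureTheory.integrableOn_const
            (by rw [Real.volume_Ioc]; exact ENNReal.ofReal_ne_top)
      _ = s * ((Fintype.card J : ℝ) * mfun ℓ) := by
          rw [MeasureTheory.setIntegral_const, MeasureTheory.measureReal_def, hIocvol, smul_eq_mul]
  have hNormSummable : Summable (fun ℓ => ∫ v in Set.Ioc (0:ℝ) s, ‖g ℓ v‖) := by
    refine Summable.of_nonneg_of_le
      (fun ℓ => MeasureTheory.integral_nonneg fun v => norm_nonneg _)
      hnormbound ?_
    exact ((hmsummable.mul_left (Fintype.card J : ℝ)).mul_left s)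
  have hswap : ∫ v in Set.Ioc (0:ℝ) s, ∑' ℓ, g ℓ v = ∑' ℓ, ∫ v in Set.Ioc (0:ℝ) s, g ℓ v :=
    (MeasureTheory.integral_tsum_of_summable_integral_norm hInt hNormSummable).symm
  have hIntEach : ∀ ℓ, ∫ v in Set.Ioc (0:ℝ) s, g ℓ v
      = Poi (γ*s) ℓ * ∑ j, ∑ w ∈ Finset.range ℓ, PiRec Q ℓ w i j := by
    intro ℓ
    have hterm : ∀ (j : J), ∀ w ∈ Finset.range ℓ,
        ∫ v in Set.Ioc (0:ℝ) s, Erl (ℓ - w) γ (s - v) * Poi (γ * v) w * PiRec Q ℓ w i j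
        = Poi (γ*s) ℓ * PiRec Q ℓ w i j := by
      intro j w hw
      have hw' : w < ℓ := Finset.mem_range.mp hw
      rw [MeasureTheory.integral_mul_const]
      rw [← intervalIntegral.integral_of_le hs.le]
      rw [erl_poi_integral γ s (ℓ-w) w (by omega), show ℓ - w + w = ℓ by omega]
    have hti : ∀ (j : J) (w : ℕ), MeasureTheory.IntegrableOn
        (fun v => Erl (ℓ - w) γ (s - v) * Poi (γ * v) w * PiRec Q ℓ w i j)
        (Set.Ioc (0:ℝ) s) := by
      intro j w
      apply Continuous.integrableOn_Ioc
      apply Continuous.mul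
      apply Continuous.mul
      · unfold Erl; fun_prop
      · unfold Poi; fun_prop
      · exact continuous_const
    rw [hgdef]
    rw [MeasureTheory.integral_finset_sum _ (fun j _ =>
      MeasureTheory.integrable_finset_sum _ (fun w _ => hti j w))]
    rw [Finset.mul_sum]
    refine Finset.sum_congr rfl (fun j _ => ?_)
    rw [MeasureTheory.integral_finset_sum _ (fun w _ => hti j w),
      Finset.sum_congr rfl (hterm j), Finset.mul_sum]
  have hB : (∫ v in (0:ℝ)..s, ∑ j, pCont γ (PiRec Q) s v i j)
      = ∑' ℓ, Poi (γ*s) ℓ * ∑ j, ∑ w ∈ Finset.range ℓ, PiRec Q ℓ w i j := by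
    rw [intervalIntegral.integral_of_le hs.le,
      MeasureTheory.setIntegral_congr_fun measurableSet_Ioc hFeq, hswap]
    exact tsum_congr hIntEach
  -- summability of both series
  have hinner_le : ∀ ℓ, ∑ j, ∑ w ∈ Finset.range ℓ, PiRec Q ℓ w i j ≤ (ℓ : ℝ) := by
    intro ℓ
    rw [Finset.sum_comm]
    calc ∑ w ∈ Finset.range ℓ, ∑ j, PiRec Q ℓ w i j
        ≤ ∑ _w ∈ Finset.range ℓ, (1:ℝ) :=
          Finset.sum_le_sum fun w _ => PiRec_rowsum_le Q hQ ℓ w i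
      _ = (ℓ : ℝ) := by simp
  have hinner_nonneg : ∀ ℓ, 0 ≤ ∑ j, ∑ w ∈ Finset.range ℓ, PiRec Q ℓ w i j :=
    fun ℓ => Finset.sum_nonneg fun j _ => Finset.sum_nonneg fun w _ => hP0 ℓ w i j
  have hsa : Summable (fun ℓ => Poi (γ*s) ℓ * PiRec Q ℓ ℓ i i) := by
    refine Summable.of_nonneg_of_le
      (fun ℓ => mul_nonneg (poi_nonneg hlam0 ℓ) (hP0 ℓ ℓ i i))
      (fun ℓ => mul_le_of_le_one_right (poi_nonneg hlam0 ℓ) (hP1 ℓ ℓ i i))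
      (poi_summable (γ*s))
  have hsb : Summable (fun ℓ => Poi (γ*s) ℓ * ∑ j, ∑ w ∈ Finset.range ℓ, PiRec Q ℓ w i j) := by
    refine Summable.of_nonneg_of_le
      (fun ℓ => mul_nonneg (poi_nonneg hlam0 ℓ) (hinner_nonneg ℓ))
      (fun ℓ => mul_le_mul_of_nonneg_left (hinner_le ℓ) (poi_nonneg hlam0 ℓ)) ?_
    apply summable_shift
    have : (fun n => Poi (γ*s) (n+1) * ((n+1 : ℕ) : ℝ)) = fun n => (γ*s) * Poi (γ*s) n := by
      funext n
      rw [← poi_succ_mul (γ*s) n]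
      push_cast
      ring
    rw [this]
    exact (poi_summable (γ*s)).mul_left (γ*s)
  rw [hA, hB, ← Summable.tsum_add hsa hsb]
  have hfinal : ∀ ℓ, Poi (γ*s) ℓ * PiRec Q ℓ ℓ i i
      + Poi (γ*s) ℓ * ∑ j, ∑ w ∈ Finset.range ℓ, PiRec Q ℓ w i j = Poi (γ*s) ℓ := by
    intro ℓ
    have hdiag : PiRec Q ℓ ℓ i i = ∑ j, PiRec Q ℓ ℓ i j := by
      rw [Finset.sum_eq_single i
        (fun j _ hj => PiRec_diag Q ℓ i j (fun h => hj h.symm)) (by simp)]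
    have : PiRec Q ℓ ℓ i i + ∑ j, ∑ w ∈ Finset.range ℓ, PiRec Q ℓ w i j
        = ∑ w ∈ Finset.range (ℓ+1), ∑ j, PiRec Q ℓ w i j := by
      rw [Finset.sum_range_succ, Finset.sum_comm, hdiag]
      ring
    rw [← mul_add, this, PiRec_rowsum Q hQ ℓ i, mul_one]
  rw [tsum_congr hfinal, poi_tsum (γ*s)]

end
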